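/- Let K be Stonian and let the Boolean algebra B of idempotents in C(K) be Bade complete on a Banach C(K)-module X. Then for every x ∈ X and x' ∈ X', the functional μ(a) = x'(m(a)x) on C(K), when positive, is order continuous; in particular μ vanishes on every closed nowhere dense subset of K (viewing μ as a regular Borel measure). -/
import Mathlib


open Filter Topology

/-- The Boolean algebra of idempotents of `C(K)` is Bade complete on `X`. -/
def BadeComplete {K X : Type*} [TopologicalSpace K] [CompactSpace K] [T2Space K]
    [NormedAddCommGroup X] [NormedSpace ℝ X] [CompleteSpace X]
    (m : C(K, ℝ) →ₐ[ℝ] (X →L[ℝ] X)) : Prop :=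
  ∀ S : Set C(K, ℝ), (∀ e ∈ S, e * e = e) → S.Nonempty → DirectedOn (· ≤ ·) S →
    ∀ E : C(K, ℝ), E * E = E → IsLUB S E →
      ∀ x : X, Filter.Tendsto (fun e : S => m (e : C(K, ℝ)) x) Filter.atTop (nhds (m E x))


section IndAux
variable {K : Type*} [TopologicalSpace K]

/-- Indicator of a clopen set as a continuous map. -/
noncomputable def indCM (V : Set K) (hV : IsClopen V) : C(K, ℝ) :=
  ⟨V.indicator 1, continuous_indicator (by simp [hV]) continuous_const.continuousOn⟩

theorem indCM_apply_of_mem {V : Set K} (hV : IsClopen V) {k : K} (hk : k ∈ V) :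
    indCM V hV k = 1 := by
  simp [indCM, Set.indicator_of_mem hk]

theorem indCM_apply_of_notMem {V : Set K} (hV : IsClopen V) {k : K} (hk : k ∉ V) :
    indCM V hV k = 0 := by
  simp [indCM, Set.indicator_of_notMem hk]

theorem indCM_nonneg {V : Set K} (hV : IsClopen V) : (0 : C(K, ℝ)) ≤ indCM V hV := by
  rw [ContinuousMap.le_def]
  intro k
  by_cases hk : k ∈ V
  · simp [indCM_apply_of_mem hV hk]
  · simp [indCM_apply_of_notMem hV hk]

theorem indCM_le_one {V : Set K} (hV : IsClopen V) : indCM V hV ≤ 1 := by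
  rw [ContinuousMap.le_def]
  intro k
  by_cases hk : k ∈ V
  · simp [indCM_apply_of_mem hV hk]
  · simp [indCM_apply_of_notMem hV hk]

theorem indCM_mono {V W : Set K} (hV : IsClopen V) (hW : IsClopen W) (hVW : V ⊆ W) :
    indCM V hV ≤ indCM W hW := by
  rw [ContinuousMap.le_def]
  intro k
  by_cases hk : k ∈ V
  · simp [indCM_apply_of_mem hV hk, indCM_apply_of_mem hW (hVW hk)]
  · simp [indCM_apply_of_notMem hV hk]
    by_cases hk' : k ∈ W
    · simp [indCM_apply_of_mem hW hk']
    · simp [indCM_apply_of_notMem hW hk']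

theorem indCM_mul_self {V : Set K} (hV : IsClopen V) :
    indCM V hV * indCM V hV = indCM V hV := by
  ext k
  rw [ContinuousMap.mul_apply]
  by_cases hk : k ∈ V
  · simp [indCM_apply_of_mem hV hk]
  · simp [indCM_apply_of_notMem hV hk]

theorem one_sub_indCM_mul_self {V : Set K} (hV : IsClopen V) :
    (1 - indCM V hV) * (1 - indCM V hV) = 1 - indCM V hV := by
  ext k
  by_cases hk : k ∈ V
  · simp [indCM_apply_of_mem hV hk]
  · simp [indCM_apply_of_notMem hV hk]

end IndAux

theorem subtype_isDirected {α : Type*} [Preorder α] {S : Set α}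
    (hdir : DirectedOn (· ≤ ·) S) : IsDirected ↥S (· ≤ ·) := by
  constructor
  intro a b
  obtain ⟨c, hc, hac, hbc⟩ := hdir a a.2 b b.2
  exact ⟨⟨c, hc⟩, hac, hbc⟩

theorem stmt14' {K X : Type*} [TopologicalSpace K] [CompactSpace K] [T2Space K]
    [ExtremallyDisconnected K]
    [NormedAddCommGroup X] [NormedSpace ℝ X] [CompleteSpace X]
    (m : C(K, ℝ) →ₐ[ℝ] (X →L[ℝ] X))
    (hm : ∀ a : C(K, ℝ), ‖m a‖ = ‖a‖)
    (hBade : ∀ S : Set C(K, ℝ), (∀ e ∈ S, e * e = e) → S.Nonempty → DirectedOn (· ≤ ·) S →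
    ∀ E : C(K, ℝ), E * E = E → IsLUB S E →
      ∀ x : X, Filter.Tendsto (fun e : S => m (e : C(K, ℝ)) x) Filter.atTop (nhds (m E x)))
    (x : X) (x' : X →L[ℝ] ℝ)
    (hpos : ∀ a : C(K, ℝ), 0 ≤ a → 0 ≤ x' (m a x)) :
    (∀ D : Set K, IsClosed D → interior D = ∅ → ∀ ε > (0 : ℝ), ∃ a : C(K, ℝ),
      0 ≤ a ∧ a ≤ 1 ∧ (∀ k ∈ D, a k = 1) ∧ x' (m a x) < ε) := by
  intro D hD hDint ε hε
  set S : Set C(K, ℝ) :=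
    {f | ∃ V : Set K, ∃ hV : IsClopen V, V ∩ D = ∅ ∧ f = indCM V hV} with hS
  have hidem : ∀ e ∈ S, e * e = e := by
    rintro e ⟨V, hV, -, rfl⟩
    exact indCM_mul_self hV
  have hne : S.Nonempty :=
    ⟨indCM ∅ isClopen_empty, ∅, isClopen_empty, Set.empty_inter D, rfl⟩
  have hdir : DirectedOn (· ≤ ·) S := by
    rintro f ⟨V, hV, hVD, rfl⟩ g ⟨W, hW, hWD, rfl⟩
    refine ⟨indCM (V ∪ W) (hV.union hW), ⟨V ∪ W, hV.union hW, ?_, rfl⟩,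
      indCM_mono hV _ Set.subset_union_left, indCM_mono hW _ Set.subset_union_right⟩
    rw [Set.union_inter_distrib_right, hVD, hWD, Set.union_empty]
  have hlub : IsLUB S 1 := by
    constructor
    · rintro f ⟨V, hV, -, rfl⟩
      exact indCM_le_one hV
    · intro g hg
      rw [ContinuousMap.le_def]
      have hCcl : IsClosed {k : K | (1 : ℝ) ≤ g k} :=
        isClosed_le continuous_const (map_continuous g)
      have hsub : Dᶜ ⊆ {k : K | (1 : ℝ) ≤ g k} := by
        intro k hk
        obtain ⟨t, htk, htcl, hts⟩ :=
          exists_mem_nhds_isClosed_subset ((hD.isOpen_compl).mem_nhds hk)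
        set V' := closure (interior t) with hV'def
        have hV' : IsClopen V' :=
          ⟨isClosed_closure, ExtremallyDisconnected.open_closure _ isOpen_interior⟩
        have hkV' : k ∈ V' := subset_closure (mem_interior_iff_mem_nhds.mpr htk)
        have hV'D : V' ∩ D = ∅ := by
          have hsubc : V' ⊆ Dᶜ := (closure_minimal interior_subset htcl).trans hts
          rw [Set.eq_empty_iff_forall_notMem]
          rintro y ⟨hy1, hy2⟩
          exact hsubc hy1 hy2
        have hmem : indCM V' hV' ∈ S := ⟨V', hV', hV'D, rfl⟩
        have hgk := ContinuousMap.le_def.mp (hg hmem) k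
        rw [indCM_apply_of_mem hV' hkV'] at hgk
        exact hgk
      have hdense : Dense Dᶜ := interior_eq_empty_iff_dense_compl.mp hDint
      intro k
      have : closure Dᶜ ⊆ {k : K | (1 : ℝ) ≤ g k} := hCcl.closure_subset_iff.mpr hsub
      have hk : k ∈ {k : K | (1 : ℝ) ≤ g k} := this (by rw [hdense.closure_eq]; trivial)
      simpa using hk
  have htend := hBade S hidem hne hdir 1 (one_mul 1) hlub x
  haveI : Nonempty ↥S := hne.to_subtype
  haveI : IsDirected ↥S (· ≤ ·) := subtype_isDirected hdir
  haveI : (Filter.atTop : Filter ↥S).NeBot := Filter.atTop_neBot_iff.mpr ⟨‹_›, ‹_›⟩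
  have htend' : Filter.Tendsto (fun e : ↥S => x' (m (e : C(K, ℝ)) x)) Filter.atTop
      (nhds (x' (m 1 x))) := (x'.continuous.tendsto _).comp htend
  obtain ⟨f, hf⟩ := (Metric.tendsto_nhds.mp htend' ε hε).exists
  obtain ⟨V, hV, hVD, hfV⟩ := f.2
  refine ⟨1 - indCM V hV, ?_, ?_, ?_, ?_⟩
  · rw [ContinuousMap.le_def]
    intro k
    have h := ContinuousMap.le_def.mp (indCM_le_one hV) k
    simp only [ContinuousMap.one_apply] at h
    simp only [ContinuousMap.sub_apply, ContinuousMap.one_apply, ContinuousMap.zero_apply]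
    linarith
  · rw [ContinuousMap.le_def]
    intro k
    have h := ContinuousMap.le_def.mp (indCM_nonneg hV) k
    simp only [ContinuousMap.zero_apply] at h
    simp only [ContinuousMap.sub_apply, ContinuousMap.one_apply]
    linarith
  · intro k hk
    have hkV : k ∉ V := fun hkV => Set.eq_empty_iff_forall_notMem.mp hVD k ⟨hkV, hk⟩
    simp [indCM_apply_of_notMem hV hkV]
  · have hval : x' (m (1 - indCM V hV) x) = x' (m 1 x) - x' (m (indCM V hV) x) := by
      rw [map_sub m, ContinuousLinearMap.sub_apply, map_sub]
    rw [hval]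
    rw [Real.dist_eq] at hf
    have h1 : x' (m (↑f) x) = x' (m (indCM V hV) x) := by rw [hfV]
    have h2 := neg_abs_le (x' (m (↑f) x) - x' (m 1 x))
    rw [h1] at h2 hf
    linarith [hf, h2]

theorem stmt14a {K X : Type*} [TopologicalSpace K] [CompactSpace K] [T2Space K]
    [ExtremallyDisconnected K]
    [NormedAddCommGroup X] [NormedSpace ℝ X] [CompleteSpace X]
    (m : C(K, ℝ) →ₐ[ℝ] (X →L[ℝ] X))
    (hBade : ∀ S : Set C(K, ℝ), (∀ e ∈ S, e * e = e) → S.Nonempty → DirectedOn (· ≤ ·) S →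
    ∀ E : C(K, ℝ), E * E = E → IsLUB S E →
      ∀ x : X, Filter.Tendsto (fun e : S => m (e : C(K, ℝ)) x) Filter.atTop (nhds (m E x)))
    (x : X) (x' : X →L[ℝ] ℝ)
    (hpos : ∀ a : C(K, ℝ), 0 ≤ a → 0 ≤ x' (m a x)) :
    ∀ S : Set C(K, ℝ), S.Nonempty → DirectedOn (· ≤ ·) S → ∀ b : C(K, ℝ), IsLUB S b →
      Filter.Tendsto (fun a : S => x' (m (a : C(K, ℝ)) x)) Filter.atTop
        (nhds (x' (m b x))) := by
  intro S hSne hSdir b hb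
  have hmono : ∀ {a c : C(K, ℝ)}, a ≤ c → x' (m a x) ≤ x' (m c x) := by
    intro a c hac
    have h0 := hpos (c - a) (by rwa [sub_nonneg])
    rw [map_sub m, ContinuousLinearMap.sub_apply, map_sub] at h0
    linarith
  have key : ∀ ε > (0 : ℝ), ∃ a ∈ S, x' (m b x) - x' (m a x) < ε := by
    intro ε hε
    obtain ⟨a₀, ha₀⟩ := hSne
    set M := ‖b - a₀‖ with hMdef
    have hM0 : (0 : ℝ) ≤ M := norm_nonneg _
    have hone : (0 : C(K, ℝ)) ≤ 1 := by
      rw [ContinuousMap.le_def]; intro k; simp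
    have hμ1 : 0 ≤ x' (m 1 x) := hpos 1 hone
    have hpos2 : (0 : ℝ) < 2 * (x' (m 1 x) + 1) := by linarith
    set δ := ε / (2 * (x' (m 1 x) + 1)) with hδdef
    have hδ : 0 < δ := div_pos hε hpos2
    set T := {a | a ∈ S ∧ a₀ ≤ a} with hT
    have ha₀T : a₀ ∈ T := ⟨ha₀, le_refl _⟩
    have hTdir : DirectedOn (· ≤ ·) T := by
      rintro u ⟨huS, hu0⟩ v ⟨hvS, hv0⟩
      obtain ⟨w, hwS, huw, hvw⟩ := hSdir u huS v hvS
      exact ⟨w, ⟨hwS, hu0.trans huw⟩, huw, hvw⟩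
    have hTub : ∀ a ∈ T, a ≤ b := fun a ha => hb.1 ha.1
    set U : C(K, ℝ) → Set K := fun a => closure {k | δ < (b - a) k} with hUdef
    have hUclopen : ∀ a, IsClopen (U a) := fun a =>
      ⟨isClosed_closure, ExtremallyDisconnected.open_closure _
        (isOpen_lt continuous_const (map_continuous (b - a)))⟩
    have hUge : ∀ a, ∀ k ∈ U a, δ ≤ (b - a) k := by
      intro a
      have hsub : U a ⊆ {k | δ ≤ (b - a) k} :=
        closure_minimal (fun k hk => Set.mem_setOf.mpr (le_of_lt (Set.mem_setOf.mp hk)))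
          (isClosed_le continuous_const (map_continuous (b - a)))
      exact fun k hk => hsub hk
    have hUmono : ∀ {u v : C(K, ℝ)}, u ≤ v → U v ⊆ U u := by
      intro u v huv
      apply closure_mono
      intro k hk
      have h1 : (b - v) k ≤ (b - u) k := by
        simp only [ContinuousMap.sub_apply]
        have := ContinuousMap.le_def.mp huv k
        linarith
      exact Set.mem_setOf.mpr (lt_of_lt_of_le (Set.mem_setOf.mp hk) h1)
    set e : C(K, ℝ) → C(K, ℝ) := fun a => 1 - indCM (U a) (hUclopen a) with hedef
    have hemono : ∀ {u v : C(K, ℝ)}, u ≤ v → e u ≤ e v := by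
      intro u v huv
      have hle := indCM_mono (hUclopen v) (hUclopen u) (hUmono huv)
      rw [ContinuousMap.le_def]
      intro k
      have := ContinuousMap.le_def.mp hle k
      simp only [hedef, ContinuousMap.sub_apply, ContinuousMap.one_apply]
      linarith
    set Se := e '' T with hSedef
    have hidem : ∀ f ∈ Se, f * f = f := by
      rintro f ⟨a, ha, rfl⟩
      simp only [hedef]
      exact one_sub_indCM_mul_self _
    have hSene : Se.Nonempty := ⟨e a₀, a₀, ha₀T, rfl⟩
    have hSedir : DirectedOn (· ≤ ·) Se := by
      rintro f ⟨u, hu, rfl⟩ g ⟨v, hv, rfl⟩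
      obtain ⟨w, hw, huw, hvw⟩ := hTdir u hu v hv
      exact ⟨e w, ⟨w, hw, rfl⟩, hemono huw, hemono hvw⟩
    have hint : interior (⋂ a ∈ T, U a) = ∅ := by
      by_contra hcon
      obtain ⟨k₀, hk₀⟩ := Set.nonempty_iff_ne_empty.mpr hcon
      set V := closure (interior (⋂ a ∈ T, U a)) with hVdef
      have hVcl : IsClopen V :=
        ⟨isClosed_closure, ExtremallyDisconnected.open_closure _ isOpen_interior⟩
      have hk₀V : k₀ ∈ V := subset_closure hk₀
      have hVsub : ∀ a ∈ T, V ⊆ U a := by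
        intro a ha
        apply closure_minimal _ (hUclopen a).1
        exact interior_subset.trans (Set.biInter_subset_of_mem ha)
      have hub : b - δ • indCM V hVcl ∈ upperBounds S := by
        intro s hs
        obtain ⟨t, htS, hst, h0t⟩ := hSdir s hs a₀ ha₀
        have htT : t ∈ T := ⟨htS, h0t⟩
        refine hst.trans ?_
        rw [ContinuousMap.le_def]
        intro k
        simp only [ContinuousMap.sub_apply, ContinuousMap.smul_apply, smul_eq_mul]
        by_cases hk : k ∈ V
        · have hge := hUge t k (hVsub t htT hk)
          rw [indCM_apply_of_mem hVcl hk]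
          simp only [ContinuousMap.sub_apply] at hge
          linarith
        · rw [indCM_apply_of_notMem hVcl hk]
          have := ContinuousMap.le_def.mp (hTub t htT) k
          linarith
      have hble := hb.2 hub
      have hev := ContinuousMap.le_def.mp hble k₀
      simp only [ContinuousMap.sub_apply, ContinuousMap.smul_apply, smul_eq_mul,
        indCM_apply_of_mem hVcl hk₀V] at hev
      linarith
    have hlub : IsLUB Se 1 := by
      constructor
      · rintro f ⟨a, ha, rfl⟩
        rw [ContinuousMap.le_def]
        intro k
        have h := ContinuousMap.le_def.mp (indCM_nonneg (hUclopen a)) k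
        simp only [ContinuousMap.zero_apply] at h
        simp only [hedef, ContinuousMap.sub_apply, ContinuousMap.one_apply]
        linarith
      · intro g hg
        rw [ContinuousMap.le_def]
        have hCcl : IsClosed {k : K | (1 : ℝ) ≤ g k} :=
          isClosed_le continuous_const (map_continuous g)
        have hsub : (⋂ a ∈ T, U a)ᶜ ⊆ {k : K | (1 : ℝ) ≤ g k} := by
          intro k hk
          simp only [Set.mem_compl_iff, Set.mem_iInter] at hk
          push_neg at hk
          obtain ⟨a, ha, hka⟩ := hk
          have hgk := ContinuousMap.le_def.mp (hg ⟨a, ha, rfl⟩) k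
          simp only [hedef, ContinuousMap.sub_apply, ContinuousMap.one_apply,
            indCM_apply_of_notMem (hUclopen a) hka] at hgk
          simpa using hgk
        have hdense : Dense (⋂ a ∈ T, U a)ᶜ := interior_eq_empty_iff_dense_compl.mp hint
        intro k
        have h2 : closure ((⋂ a ∈ T, U a)ᶜ) ⊆ {k : K | (1 : ℝ) ≤ g k} :=
          hCcl.closure_subset_iff.mpr hsub
        have hkmem : k ∈ closure ((⋂ a ∈ T, U a)ᶜ) := by
          rw [hdense.closure_eq]; trivial
        have hk1 := h2 hkmem
        simpa using hk1
    have htend := hBade Se hidem hSene hSedir 1 (one_mul 1) hlub x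
    haveI : Nonempty ↥Se := hSene.to_subtype
    haveI : IsDirected ↥Se (· ≤ ·) := subtype_isDirected hSedir
    haveI : (Filter.atTop : Filter ↥Se).NeBot := Filter.atTop_neBot_iff.mpr ⟨‹_›, ‹_›⟩
    have htend' : Filter.Tendsto (fun f : ↥Se => x' (m (f : C(K, ℝ)) x)) Filter.atTop
        (nhds (x' (m 1 x))) := (x'.continuous.tendsto _).comp htend
    have hpos3 : (0 : ℝ) < 2 * (M + 1) := by linarith
    set ε₂ := ε / (2 * (M + 1)) with hε₂def
    have hε₂ : 0 < ε₂ := div_pos hε hpos3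
    obtain ⟨f, hf⟩ := (Metric.tendsto_nhds.mp htend' ε₂ hε₂).exists
    obtain ⟨a₁, ha₁T, hfe⟩ := f.2
    refine ⟨a₁, ha₁T.1, ?_⟩
    set q := x' (m (indCM (U a₁) (hUclopen a₁)) x) with hqdef
    have hq0 : 0 ≤ q := hpos _ (indCM_nonneg _)
    have hfx : x' (m (↑f : C(K, ℝ)) x) = x' (m 1 x) - q := by
      rw [← hfe]
      simp only [hedef]
      rw [map_sub m, ContinuousLinearMap.sub_apply, map_sub, hqdef]
    rw [Real.dist_eq, hfx] at hf
    rw [show x' (m 1 x) - q - x' (m 1 x) = -q by ring, abs_neg, abs_of_nonneg hq0] at hf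
    -- now hf : q < ε₂
    have h1 : x' (m b x) - x' (m a₁ x) = x' (m (b - a₁) x) := by
      rw [map_sub m, ContinuousLinearMap.sub_apply, map_sub]
    have hpt : b - a₁ ≤ δ • (1 : C(K, ℝ)) + M • indCM (U a₁) (hUclopen a₁) := by
      rw [ContinuousMap.le_def]
      intro k
      simp only [ContinuousMap.add_apply, ContinuousMap.smul_apply, ContinuousMap.one_apply,
        smul_eq_mul, ContinuousMap.sub_apply]
      by_cases hk : k ∈ U a₁
      · rw [indCM_apply_of_mem _ hk]
        have h01 := ContinuousMap.le_def.mp ha₁T.2 k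
        have hnorm := ContinuousMap.norm_coe_le_norm (b - a₀) k
        have hbnd : (b - a₀) k ≤ M :=
          le_trans (le_abs_self _) (by simpa [Real.norm_eq_abs] using hnorm)
        simp only [ContinuousMap.sub_apply] at hbnd
        linarith [hδ.le]
      · rw [indCM_apply_of_notMem _ hk]
        have hnlt : ¬ δ < (b - a₁) k := fun h => hk (subset_closure h)
        rw [not_lt] at hnlt
        simp only [ContinuousMap.sub_apply] at hnlt
        linarith
    have hmub := hmono hpt
    have hsmul : x' (m (δ • (1 : C(K, ℝ)) + M • indCM (U a₁) (hUclopen a₁)) x)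
        = δ * x' (m 1 x) + M * q := by
      rw [map_add m, map_smul m, map_smul m, ContinuousLinearMap.add_apply,
        ContinuousLinearMap.smul_apply, ContinuousLinearMap.smul_apply, map_add, map_smul,
        map_smul, smul_eq_mul, smul_eq_mul, hqdef]
    rw [hsmul] at hmub
    rw [h1]
    have e1 : δ * (2 * (x' (m 1 x) + 1)) = ε := div_mul_cancel₀ _ (ne_of_gt hpos2)
    have e2 : ε₂ * (2 * (M + 1)) = ε := div_mul_cancel₀ _ (ne_of_gt hpos3)
    nlinarith [mul_le_mul_of_nonneg_left hf.le hM0, hmub, hμ1, hδ, hε₂]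
  rw [Metric.tendsto_nhds]
  intro ε hε
  obtain ⟨a₀', ha₀'S, hkey⟩ := key ε hε
  haveI : Nonempty ↥S := hSne.to_subtype
  haveI : IsDirected ↥S (· ≤ ·) := subtype_isDirected hSdir
  rw [Filter.eventually_atTop]
  refine ⟨⟨a₀', ha₀'S⟩, fun c hc => ?_⟩
  have hcb : x' (m (↑c : C(K, ℝ)) x) ≤ x' (m b x) := hmono (hb.1 c.2)
  have hc0 : x' (m a₀' x) ≤ x' (m (↑c : C(K, ℝ)) x) := hmono hc
  rw [Real.dist_eq, abs_of_nonpos (by linarith)]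
  linarith

/-- If `K` is Stonian and the idempotents are Bade complete on `X`, then every positive
functional `a ↦ x'(m a x)` is order continuous; in particular it vanishes on every
closed nowhere dense subset `D` of `K` (the measure of `D` is `0`, expressed by outer
regularity via continuous functions equal to `1` on `D`). -/
theorem stmt14 {K X : Type*} [TopologicalSpace K] [CompactSpace K] [T2Space K]
    [ExtremallyDisconnected K]
    [NormedAddCommGroup X] [NormedSpace ℝ X] [CompleteSpace X]
    (m : C(K, ℝ) →ₐ[ℝ] (X →L[ℝ] X))
    (hm : ∀ a : C(K, ℝ), ‖m a‖ = ‖a‖)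
    (hBade : BadeComplete m)
    (x : X) (x' : X →L[ℝ] ℝ)
    (hpos : ∀ a : C(K, ℝ), 0 ≤ a → 0 ≤ x' (m a x)) :
    (∀ S : Set C(K, ℝ), S.Nonempty → DirectedOn (· ≤ ·) S → ∀ b : C(K, ℝ), IsLUB S b →
      Filter.Tendsto (fun a : S => x' (m (a : C(K, ℝ)) x)) Filter.atTop
        (nhds (x' (m b x)))) ∧
    (∀ D : Set K, IsClosed D → interior D = ∅ → ∀ ε > (0 : ℝ), ∃ a : C(K, ℝ),
      0 ≤ a ∧ a ≤ 1 ∧ (∀ k ∈ D, a k = 1) ∧ x' (m a x) < ε) :=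
  ⟨stmt14a m hBade x x' hpos, stmt14' m hm hBade x x' hpos⟩
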